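/- arXiv:2603.08213 — 8 statements merged into one kernel-verified Lean document; each statement's English description precedes it below -/
import Mathlib

section
/- For every natural number k ≥ 4, the minimum distance of the code L_k is 4: every nonzero codeword c ·ᵥ G_{L_k} with c ∈ 𝔽₂^k, c ≠ 0, has Hamming weight at least 4, and some nonzero codeword has Hamming weight exactly 4. -/
open Matrix

def Gmat (k : ℕ) : Matrix (Fin k) (Fin k) (ZMod 2) :=
  fun i j => if i = j then 0 else 1

def GLk (k : ℕ) : Matrix (Fin k) (Fin k ⊕ Fin k) (ZMod 2) :=
  Matrix.fromCols 1 (Gmat k)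

def wt {n : Type*} [Fintype n] (v : n → ZMod 2) : ℕ :=
  (Finset.univ.filter fun j => v j ≠ 0).card

lemma wt_sum_elim {α β : Type*} [Fintype α] [Fintype β] (u : α → ZMod 2) (v : β → ZMod 2) :
    wt (Sum.elim u v) = wt u + wt v := by
  classical
  unfold wt
  rw [← Finset.card_toLeft_add_card_toRight]
  congr 1
  · congr 1; ext a; simp
  · congr 1; ext b; simp

lemma zmod2_ne_zero_iff (x : ZMod 2) : x ≠ 0 ↔ x = 1 := by revert x; decide

lemma vecMul_GLk (k : ℕ) (c : Fin k → ZMod 2) :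
    Matrix.vecMul c (GLk k) = Sum.elim c (fun j => (∑ i, c i) + c j) := by
  rw [GLk, Matrix.vecMul_fromCols, Matrix.vecMul_one]
  have h2 : Matrix.vecMul c (Gmat k) = fun j => (∑ i, c i) + c j := by
    funext j
    show (c ⬝ᵥ fun i => Gmat k i j) = _
    rw [dotProduct]
    have : ∀ i : Fin k, c i * Gmat k i j = c i - (if i = j then c i else 0) := by
      intro i
      by_cases h : i = j <;> simp [Gmat, h]
    simp only [this, Finset.sum_sub_distrib, Finset.sum_ite_eq' Finset.univ j c,
      Finset.mem_univ, if_true]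
    ring_nf
    rw [sub_eq_add_neg, CharTwo.neg_eq]
  rw [h2]

lemma sum_eq_wt (k : ℕ) (c : Fin k → ZMod 2) : (∑ i, c i) = (wt c : ZMod 2) := by
  classical
  rw [wt, ← Finset.sum_filter_ne_zero]
  rw [Finset.sum_congr rfl (fun i hi => (zmod2_ne_zero_iff (c i)).1 (Finset.mem_filter.1 hi).2)]
  simp

/-- For k ≥ 4, the minimum distance of `L_k` is 4. -/
theorem minDistance_Lk_eq_four (k : ℕ) (hk : 4 ≤ k) :
    (∀ c : Fin k → ZMod 2, c ≠ 0 → 4 ≤ wt (Matrix.vecMul c (GLk k))) ∧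
    (∃ c : Fin k → ZMod 2, c ≠ 0 ∧ wt (Matrix.vecMul c (GLk k)) = 4) := by
  constructor
  · intro c hc
    rw [vecMul_GLk, wt_sum_elim]
    have hwle : wt c ≤ k := le_trans (Finset.card_filter_le _ _) (by simp)
    have hw0 : wt c ≠ 0 := by
      intro h
      apply hc
      funext i
      by_contra hi
      simp only [Pi.zero_apply] at hi
      have : i ∈ Finset.univ.filter fun j => c j ≠ 0 := by simp [hi]
      rw [wt, Finset.card_eq_zero] at h
      simp [h] at this
    by_cases hS : (∑ i, c i) = 0
    · have hw1 : wt c ≠ 1 := by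
        intro h
        rw [sum_eq_wt, h] at hS
        exact one_ne_zero hS
      have h2 : 2 ≤ wt c := by omega
      have : wt (fun j => (∑ i, c i) + c j) = wt c := by
        congr 1; funext j; rw [hS, zero_add]
      omega
    · have hS1 : (∑ i, c i) = 1 := (zmod2_ne_zero_iff _).1 hS
      have : wt (fun j => (∑ i, c i) + c j) = k - wt c := by
        rw [wt, wt]
        have : (Finset.univ.filter fun j => (∑ i, c i) + c j ≠ 0)
            = (Finset.univ.filter fun j => ¬ c j ≠ 0) := by
          ext j
          simp only [Finset.mem_filter, Finset.mem_univ, true_and, hS1, not_not]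
          constructor
          · intro h
            by_contra hne
            rw [(zmod2_ne_zero_iff _).1 hne] at h
            exact h (by decide)
          · intro h; rw [h]; decide
        rw [this, Finset.filter_not, Finset.card_sdiff_of_subset (Finset.filter_subset _ _)]
        simp
      omega
  · set c : Fin k → ZMod 2 := fun i => if i = ⟨0, by omega⟩ ∨ i = ⟨1, by omega⟩ then 1 else 0
      with hcdef
    refine ⟨c, ?_, ?_⟩
    · intro h
      have := congrFun h ⟨0, by omega⟩
      simp [hcdef] at this
    · rw [vecMul_GLk, wt_sum_elim]
      have hwt : wt c = 2 := by
        rw [wt]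
        have : (Finset.univ.filter fun j : Fin k => c j ≠ 0)
            = {⟨0, by omega⟩, ⟨1, by omega⟩} := by
          ext j
          by_cases h : j = ⟨0, by omega⟩ ∨ j = ⟨1, by omega⟩
          · simp [hcdef, h]; tauto
          · push_neg at h
            simp [hcdef, h.1, h.2]
        rw [this, Finset.card_insert_of_notMem (by simp [Fin.ext_iff]), Finset.card_singleton]
      have hS : (∑ i, c i) = 0 := by rw [sum_eq_wt, hwt]; decide
      simp only [hS, zero_add]
      rw [hwt]
end

section
/- For every natural number k ≥ 1, the null space {v ∈ 𝔽₂^{3k} : H_{L_k^+} · v = 0} coincides with the 𝔽₂-span of the rows of G_{L_k^+}; in particular, the code L_k^+ (the row space of G_{L_k^+}) has 𝔽₂-dimension exactly k. -/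
open Matrix

/-- Generator matrix of the code `L_k^+`: the block matrix `[I_k | G_k | I_k]`. -/
def GLkp (k : ℕ) : Matrix (Fin k) (Fin k ⊕ Fin k ⊕ Fin k) (ZMod 2) :=
  Matrix.fromCols 1 (Matrix.fromCols (Gmat k) 1)

/-- Parity-check matrix of the code `L_k^+`:
the block matrix `[[G_k, I_k, 0_k], [I_k, 0_k, I_k]]`. -/
def HLkp (k : ℕ) : Matrix (Fin k ⊕ Fin k) (Fin k ⊕ Fin k ⊕ Fin k) (ZMod 2) :=
  Matrix.fromRows
    (Matrix.fromCols (Gmat k) (Matrix.fromCols 1 0))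
    (Matrix.fromCols 1 (Matrix.fromCols 0 1))

lemma vecMul_GLkp (k : ℕ) (x : Fin k → ZMod 2) :
    x ᵥ* GLkp k = Sum.elim x (Sum.elim (x ᵥ* Gmat k) x) := by
  simp [GLkp]

lemma Gmat_transpose (k : ℕ) : (Gmat k)ᵀ = Gmat k := by
  ext i j
  simp [Gmat, transpose_apply, eq_comm]

lemma mulVec_HLkp (k : ℕ) (v : Fin k ⊕ (Fin k ⊕ Fin k) → ZMod 2) :
    HLkp k *ᵥ v =
      Sum.elim (Gmat k *ᵥ (v ∘ Sum.inl) + (v ∘ Sum.inr ∘ Sum.inl))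
        ((v ∘ Sum.inl) + (v ∘ Sum.inr ∘ Sum.inr)) := by
  have hv : v = Sum.elim (v ∘ Sum.inl)
      (Sum.elim (v ∘ Sum.inr ∘ Sum.inl) (v ∘ Sum.inr ∘ Sum.inr)) := by
    funext i
    rcases i with i | (i | i) <;> rfl
  conv_lhs => rw [hv]
  rw [HLkp]
  simp [Matrix.fromBlocks_mulVec]

lemma zmod2_add_eq_zero {a b : ZMod 2} (h : a + b = 0) : a = b := by
  revert h; revert a b; decide

lemma key (k : ℕ) :
    LinearMap.ker (Matrix.mulVecLin (HLkp k)) =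
      LinearMap.range (Matrix.vecMulLinear (GLkp k)) := by
  ext v
  simp only [LinearMap.mem_ker, Matrix.mulVecLin_apply, LinearMap.mem_range,
    Matrix.vecMulLinear_apply]
  constructor
  · intro hv
    rw [mulVec_HLkp] at hv
    have h1 : Gmat k *ᵥ (v ∘ Sum.inl) + (v ∘ Sum.inr ∘ Sum.inl) = 0 := by
      have := congrArg (fun f => f ∘ Sum.inl) hv
      simpa using this
    have h2 : (v ∘ Sum.inl) + (v ∘ Sum.inr ∘ Sum.inr) = 0 := by
      have := congrArg (fun f => f ∘ Sum.inr) hv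
      simpa using this
    refine ⟨v ∘ Sum.inl, ?_⟩
    rw [vecMul_GLkp]
    funext i
    rcases i with i | (i | i)
    · rfl
    · have := congrFun h1 i
      have hsym : ((v ∘ Sum.inl) ᵥ* Gmat k) i = (Gmat k *ᵥ (v ∘ Sum.inl)) i := by
        rw [← Gmat_transpose k, Matrix.vecMul_transpose, Gmat_transpose]
      simp only [Sum.elim_inr, Sum.elim_inl, hsym]
      have h := congrFun h1 i
      simp only [Pi.add_apply, Pi.zero_apply] at h
      rw [zmod2_add_eq_zero h]
      rfl
    · have h := congrFun h2 i
      simp only [Pi.add_apply, Pi.zero_apply] at h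
      simpa using zmod2_add_eq_zero h
  · rintro ⟨x, rfl⟩
    rw [vecMul_GLkp, mulVec_HLkp]
    have hsym : x ᵥ* Gmat k = Gmat k *ᵥ x := by
      rw [← Gmat_transpose k, Matrix.vecMul_transpose, Gmat_transpose]
    funext i
    rcases i with i | i <;>
      simp [hsym, CharTwo.add_self_eq_zero]

lemma inj_vecMulLinear (k : ℕ) :
    Function.Injective (Matrix.vecMulLinear (GLkp k)) := by
  intro x y h
  simp only [Matrix.vecMulLinear_apply, vecMul_GLkp] at h
  funext i
  exact congrFun (congrArg (fun f => f ∘ Sum.inl) h) i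

/-- For `k ≥ 1`, the null space of `H_{L_k^+}` equals the row space of `G_{L_k^+}`,
and this row space has dimension `k`. -/
theorem nullSpace_HLkp_eq_rowSpace_GLkp (k : ℕ) (hk : 1 ≤ k) :
    LinearMap.ker (Matrix.mulVecLin (HLkp k)) =
      Submodule.span (ZMod 2) (Set.range (GLkp k)) ∧
    Module.finrank (ZMod 2)
      ↥(Submodule.span (ZMod 2) (Set.range (GLkp k))) = k := by
  have hspan : Submodule.span (ZMod 2) (Set.range (GLkp k)) =
      LinearMap.range (Matrix.vecMulLinear (GLkp k)) :=
    (range_vecMulLinear (GLkp k)).symm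
  constructor
  · rw [hspan, key]
  · rw [hspan, LinearMap.finrank_range_of_inj (inj_vecMulLinear k)]
    simp
end

section
/- For k = 4, the minimum distance of the code L_4^+ is 5: every nonzero codeword c ·ᵥ G_{L_4^+} with c ∈ 𝔽₂^4, c ≠ 0, has Hamming weight at least 5, and some nonzero codeword has Hamming weight exactly 5. -/
open Matrix

/-- The minimum distance of `L_4^+` is 5. -/
theorem minDistance_L4p_eq_five :
    (∀ c : Fin 4 → ZMod 2, c ≠ 0 → 5 ≤ wt (Matrix.vecMul c (GLkp 4))) ∧
    (∃ c : Fin 4 → ZMod 2, c ≠ 0 ∧ wt (Matrix.vecMul c (GLkp 4)) = 5) := by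
  constructor
  · decide
  · exact ⟨![1,0,0,0], by decide, by decide⟩
end

section
/- Hypergraph product orthogonality: let H₁ be an r₁×n₁ matrix and H₂ an r₂×n₂ matrix over 𝔽₂ = ZMod 2, and define the block matrices H_X = [H₁ ⊗ I_{n₂} | I_{r₁} ⊗ H₂ᵀ] (of size r₁n₂ × (n₁n₂ + r₁r₂)) and H_Z = [I_{n₁} ⊗ H₂ | H₁ᵀ ⊗ I_{r₂}] (of size n₁r₂ × (n₁n₂ + r₁r₂)), where ⊗ denotes the Kronecker product. Then H_X · H_Zᵀ = 0 over 𝔽₂. -/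
open Matrix Kronecker

/-- Hypergraph product orthogonality: with `H_X = [H₁ ⊗ I_{n₂} | I_{r₁} ⊗ H₂ᵀ]` and
`H_Z = [I_{n₁} ⊗ H₂ | H₁ᵀ ⊗ I_{r₂}]`, we have `H_X · H_Zᵀ = 0` over 𝔽₂. -/
theorem hypergraphProduct_orthogonality (r₁ n₁ r₂ n₂ : ℕ)
    (H₁ : Matrix (Fin r₁) (Fin n₁) (ZMod 2))
    (H₂ : Matrix (Fin r₂) (Fin n₂) (ZMod 2)) :
    Matrix.fromCols (H₁ ⊗ₖ (1 : Matrix (Fin n₂) (Fin n₂) (ZMod 2)))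
        ((1 : Matrix (Fin r₁) (Fin r₁) (ZMod 2)) ⊗ₖ H₂ᵀ) *
      (Matrix.fromCols ((1 : Matrix (Fin n₁) (Fin n₁) (ZMod 2)) ⊗ₖ H₂)
        (H₁ᵀ ⊗ₖ (1 : Matrix (Fin r₂) (Fin r₂) (ZMod 2))))ᵀ = 0 := by
  rw [Matrix.transpose_fromCols, Matrix.fromCols_mul_fromRows,
    ← Matrix.kroneckerMap_transpose, ← Matrix.kroneckerMap_transpose,
    Matrix.transpose_one, Matrix.transpose_one, Matrix.transpose_transpose,
    ← Matrix.mul_kronecker_mul, ← Matrix.mul_kronecker_mul,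
    Matrix.one_mul, Matrix.mul_one, Matrix.one_mul, Matrix.mul_one,
    ← two_smul (ZMod 2)]
  simp [show (2 : ZMod 2) = 0 from rfl]
end

section
/- CSS condition for the quantum code QL_k: for every natural number k, the matrices H_X = H_{L_k} ⊗ I_{3k} and H_Z = G_{L_k} ⊗ H_{L_k^+} over 𝔽₂ satisfy H_X · H_Zᵀ = 0 (the zero 3k² × 2k² matrix). -/
open Matrix Kronecker

/-- Parity-check matrix of the code `L_k`: the block matrix `[G_k | I_k]`. -/
def HLk (k : ℕ) : Matrix (Fin k) (Fin k ⊕ Fin k) (ZMod 2) :=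
  Matrix.fromCols (Gmat k) 1

/-- The X-type stabilizer matrix of the quantum code `QL_k`: `H_X = H_{L_k} ⊗ I_{3k}`,
a `3k² × 6k²` matrix over 𝔽₂ (the `3k`-element index set is `Fin k ⊕ Fin k ⊕ Fin k`). -/
def HXq (k : ℕ) :
    Matrix (Fin k × (Fin k ⊕ Fin k ⊕ Fin k))
      ((Fin k ⊕ Fin k) × (Fin k ⊕ Fin k ⊕ Fin k)) (ZMod 2) :=
  HLk k ⊗ₖ (1 : Matrix (Fin k ⊕ Fin k ⊕ Fin k) (Fin k ⊕ Fin k ⊕ Fin k) (ZMod 2))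

/-- The Z-type stabilizer matrix of the quantum code `QL_k`: `H_Z = G_{L_k} ⊗ H_{L_k^+}`,
a `2k² × 6k²` matrix over 𝔽₂. -/
def HZq (k : ℕ) :
    Matrix (Fin k × (Fin k ⊕ Fin k))
      ((Fin k ⊕ Fin k) × (Fin k ⊕ Fin k ⊕ Fin k)) (ZMod 2) :=
  GLk k ⊗ₖ HLkp k

lemma HLk_mul_GLk_transpose (k : ℕ) : HLk k * (GLk k)ᵀ = 0 := by
  have hsym : (Gmat k)ᵀ = Gmat k := by
    ext i j
    simp [Gmat, Matrix.transpose_apply, eq_comm]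
  rw [HLk, GLk, Matrix.transpose_fromCols, Matrix.fromCols_mul_fromRows]
  rw [hsym, Matrix.transpose_one, Matrix.mul_one, Matrix.one_mul]
  ext i j
  simp [CharTwo.add_self_eq_zero]

/-- CSS condition for `QL_k`: `H_X · H_Zᵀ = 0`. -/
theorem HXq_mul_HZq_transpose_eq_zero (k : ℕ) :
    HXq k * (HZq k)ᵀ = 0 := by
  rw [HXq, HZq, ← Matrix.kroneckerMap_transpose, ← Matrix.mul_kronecker_mul,
    HLk_mul_GLk_transpose, Matrix.zero_kronecker]
end

section
/- For every natural number k ≥ 1, the 𝔽₂-rank of the matrix H_Z = G_{L_k} ⊗ H_{L_k^+} equals 2k². -/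
open Matrix Kronecker

def Rmat (k : ℕ) : Matrix (Fin k ⊕ Fin k) (Fin k) (ZMod 2) :=
  Matrix.fromRows 1 0

def Rmat' (k : ℕ) : Matrix (Fin k ⊕ Fin k ⊕ Fin k) (Fin k ⊕ Fin k) (ZMod 2) :=
  Matrix.fromRows 0 (Matrix.fromRows (Matrix.fromCols 1 0) (Matrix.fromCols 0 1))

lemma GLk_mul_R (k : ℕ) : GLk k * Rmat k = 1 := by
  rw [GLk, Rmat, Matrix.fromCols_mul_fromRows]
  simp

lemma HLkp_mul_R' (k : ℕ) : HLkp k * Rmat' k = 1 := by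
  rw [HLkp, Rmat', Matrix.fromRows_mul, Matrix.fromCols_mul_fromRows,
    Matrix.fromCols_mul_fromRows, Matrix.fromCols_mul_fromRows]
  simp [Matrix.fromRows_fromCols_eq_fromBlocks, Matrix.fromBlocks_one]

/-- For `k ≥ 1`, the 𝔽₂-rank of `H_Z = G_{L_k} ⊗ H_{L_k^+}` equals `2k²`. -/
theorem rank_HZq (k : ℕ) (hk : 1 ≤ k) : (HZq k).rank = 2 * k ^ 2 := by
  have hcard : Fintype.card (Fin k × (Fin k ⊕ Fin k)) = 2 * k ^ 2 := by
    simp [Fintype.card_prod, Fintype.card_sum]; ring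
  have hmul : HZq k * (Rmat k ⊗ₖ Rmat' k) = 1 := by
    rw [HZq, ← Matrix.mul_kronecker_mul, GLk_mul_R, HLkp_mul_R',
      Matrix.one_kronecker_one]
  apply le_antisymm
  · exact (Matrix.rank_le_card_height _).trans_eq hcard
  · calc (2 : ℕ) * k ^ 2 = Fintype.card (Fin k × (Fin k ⊕ Fin k)) := hcard.symm
      _ = (1 : Matrix (Fin k × (Fin k ⊕ Fin k)) _ (ZMod 2)).rank := (Matrix.rank_one).symm
      _ = (HZq k * (Rmat k ⊗ₖ Rmat' k)).rank := by rw [hmul]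
      _ ≤ (HZq k).rank := Matrix.rank_mul_le_left _ _
end

section
/- Locality of the X-type stabilizers: for every natural number k ≥ 1, every row of the matrix H_X = H_{L_k} ⊗ I_{3k} over 𝔽₂ has Hamming weight exactly k (each X-type stabilizer generator of QL_k acts nontrivially on exactly k qubits). -/
open Matrix Kronecker

/-- Locality of the X-type stabilizers: every row of `H_X = H_{L_k} ⊗ I_{3k}` has
Hamming weight exactly `k`. -/
theorem row_weight_HXq (k : ℕ) (hk : 1 ≤ k)
    (i : Fin k × (Fin k ⊕ Fin k ⊕ Fin k)) :
    wt (HXq k i) = k := by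
  obtain ⟨r, s⟩ := i
  have hrow : ∀ p : (Fin k ⊕ Fin k) × (Fin k ⊕ Fin k ⊕ Fin k),
      HXq k (r, s) p ≠ 0 ↔ (HLk k r p.1 ≠ 0 ∧ p.2 = s) := by
    rintro ⟨c, t⟩
    simp only [HXq, Matrix.kroneckerMap_apply, Matrix.one_apply]
    constructor
    · intro h
      by_cases hts : s = t
      · subst hts; simpa using h
      · simp [hts] at h
    · rintro ⟨h1, rfl⟩
      simpa using h1
  have : (Finset.univ.filter fun p : (Fin k ⊕ Fin k) × (Fin k ⊕ Fin k ⊕ Fin k) =>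
      HXq k (r, s) p ≠ 0)
      = (Finset.univ.filter fun c => HLk k r c ≠ 0) ×ˢ ({s} : Finset _) := by
    ext ⟨c, t⟩
    simp only [Finset.mem_filter, Finset.mem_univ, true_and, Finset.mem_product,
      Finset.mem_singleton, hrow]
  rw [wt, this, Finset.card_product, Finset.card_singleton, mul_one]
  have hcard : (Finset.univ.filter fun c : Fin k ⊕ Fin k => HLk k r c ≠ 0)
      = (Finset.univ.filter fun c : Fin k => c ≠ r).disjSum
        (Finset.univ.filter fun c : Fin k => c = r) := by
    ext c
    cases c with
    | inl c =>
        rw [Finset.mem_filter, Finset.inl_mem_disjSum, Finset.mem_filter]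
        by_cases h : r = c
        · simp [HLk, Gmat, Matrix.fromCols, h]
        · simp [HLk, Gmat, Matrix.fromCols, h, Ne.symm h]
    | inr c =>
        rw [Finset.mem_filter, Finset.inr_mem_disjSum, Finset.mem_filter]
        by_cases h : r = c
        · simp [HLk, Matrix.fromCols, Matrix.one_apply, h]
        · simp [HLk, Matrix.fromCols, Matrix.one_apply, h, Ne.symm h]
  rw [hcard, Finset.card_disjSum, Finset.filter_ne', Finset.filter_eq']
  simp [Finset.card_erase_of_mem, Finset.card_univ]
  omega
end

section
/- Minimum distance of the quantum code QL_k: for every natural number k ≥ 4, with H_X = H_{L_k} ⊗ I_{3k} and H_Z = G_{L_k} ⊗ H_{L_k^+} over 𝔽₂, every vector v ∈ 𝔽₂^{6k²} satisfying H_X · v = 0 that does not lie in the 𝔽₂-span of the rows of H_Z has Hamming weight at least 4, every vector w ∈ 𝔽₂^{6k²} satisfying H_Z · w = 0 that does not lie in the 𝔽₂-span of the rows of H_X has Hamming weight at least 4, and at least one such vector (of either kind) of Hamming weight exactly 4 exists; i.e., the CSS minimum distance of QL_k equals 4. -/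
open Matrix Kronecker

lemma z2_cases (x : ZMod 2) : x = 0 ∨ x = 1 := by revert x; decide
lemma z2_ne (x : ZMod 2) (h : x ≠ 0) : x = 1 := by revert x; decide

lemma sum_eq_card {k : ℕ} (a : Fin k → ZMod 2) :
    ∑ j, a j = ((Finset.univ.filter fun j => a j ≠ 0).card : ZMod 2) := by
  rw [← Finset.sum_filter_ne_zero]
  rw [Finset.sum_congr rfl (fun j hj => z2_ne _ (Finset.mem_filter.mp hj).2)]
  simp

lemma gmat_mulvec {k : ℕ} (a : Fin k → ZMod 2) (i : Fin k) :
    ∑ j, Gmat k i j * a j = (∑ j, a j) + a i := by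
  have h : ∀ j, Gmat k i j * a j = a j + (if i = j then a j else 0) := by
    intro j
    simp only [Gmat]
    split
    · rename_i h; subst h; simp [CharTwo.add_self_eq_zero]
    · simp
  rw [Finset.sum_congr rfl (fun j _ => h j), Finset.sum_add_distrib, Finset.sum_ite_eq]
  simp

lemma wt_sum {α β : Type*} [Fintype α] [Fintype β] (c : α ⊕ β → ZMod 2) :
    wt c = wt (fun i => c (Sum.inl i)) + wt (fun i => c (Sum.inr i)) := by
  simp only [wt, Finset.card_filter]
  rw [Fintype.sum_sum_type]

lemma pair_wt {k : ℕ} (hk : 4 ≤ k) (a b : Fin k → ZMod 2) (ha : a ≠ 0)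
    (hb : ∀ i, b i = (∑ j, a j) + a i) : 4 ≤ wt a + wt b := by
  rcases z2_cases (∑ j, a j) with hσ | hσ
  · -- even case : b = a
    have hba : ∀ i, b i = a i := by intro i; rw [hb i, hσ, zero_add]
    have hwb : wt b = wt a := by
      unfold wt
      rw [Finset.filter_congr (fun i _ => by rw [hba i])]
    have hdvd : 2 ∣ wt a := by
      have := sum_eq_card a
      rw [hσ] at this
      exact (ZMod.natCast_eq_zero_iff _ 2).mp this.symm
    have hpos : 1 ≤ wt a := by
      rcases Function.ne_iff.mp ha with ⟨i, hi⟩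
      simp only [Pi.zero_apply] at hi
      exact Finset.card_pos.mpr ⟨i, by simp [hi]⟩
    obtain ⟨m, hm⟩ := hdvd
    omega
  · -- odd case : b = 1 + a
    have hba : ∀ i, b i ≠ 0 ↔ ¬ a i ≠ 0 := by
      intro i; rw [hb i, hσ]
      rcases z2_cases (a i) with h | h <;> rw [h] <;> decide
    have : wt a + wt b = k := by
      unfold wt
      rw [Finset.filter_congr (fun i (_ : i ∈ Finset.univ) => hba i)]
      rw [Finset.card_filter_add_card_filter_not]
      simp
    omega

lemma kerHLk_wt {k : ℕ} (hk : 4 ≤ k) (c : Fin k ⊕ Fin k → ZMod 2)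
    (hc : HLk k *ᵥ c = 0) (hne : c ≠ 0) : 4 ≤ wt c := by
  set a : Fin k → ZMod 2 := fun i => c (Sum.inl i) with ha_def
  set b : Fin k → ZMod 2 := fun i => c (Sum.inr i) with hb_def
  have hc' : ∀ i, (∑ j, Gmat k i j * a j) + b i = 0 := by
    intro i
    have := congrFun hc i
    simp only [Matrix.mulVec, dotProduct, Fintype.sum_sum_type, HLk,
      Matrix.fromCols_apply_inl, Matrix.fromCols_apply_inr, Matrix.one_apply,
      ite_mul, one_mul, zero_mul, Finset.sum_ite_eq, Finset.mem_univ, if_true,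
      Pi.zero_apply] at this
    exact this
  have hb : ∀ i, b i = (∑ j, a j) + a i := by
    intro i
    have h := hc' i
    rw [gmat_mulvec] at h
    rw [eq_neg_of_add_eq_zero_right h, CharTwo.neg_eq]
  have ha : a ≠ 0 := by
    intro h0
    apply hne
    funext x
    cases x with
    | inl i => exact congrFun h0 i
    | inr i =>
      have := hb i
      rw [h0] at this
      simpa using this
  rw [wt_sum]
  exact pair_wt hk a b ha hb

lemma kerHLkp_small {k : ℕ} (hk : 4 ≤ k) (u : Fin k ⊕ (Fin k ⊕ Fin k) → ZMod 2)
    (hu : HLkp k *ᵥ u = 0) (hw : wt u ≤ 3) : u = 0 := by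
  set a : Fin k → ZMod 2 := fun i => u (Sum.inl i) with ha_def
  set b : Fin k → ZMod 2 := fun i => u (Sum.inr (Sum.inl i)) with hb_def
  set c : Fin k → ZMod 2 := fun i => u (Sum.inr (Sum.inr i)) with hc_def
  have h1 : ∀ i, (∑ j, Gmat k i j * a j) + b i = 0 := by
    intro i
    have := congrFun hu (Sum.inl i)
    simp only [Matrix.mulVec, dotProduct, Fintype.sum_sum_type, HLkp,
      Matrix.fromRows_apply_inl, Matrix.fromRows_apply_inr,
      Matrix.fromCols_apply_inl, Matrix.fromCols_apply_inr, Matrix.one_apply,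
      Matrix.zero_apply, ite_mul, one_mul, zero_mul, Finset.sum_ite_eq,
      Finset.mem_univ, if_true, Finset.sum_const_zero, add_zero, Pi.zero_apply] at this
    exact this
  have h2 : ∀ i, a i + c i = 0 := by
    intro i
    have := congrFun hu (Sum.inr i)
    simp only [Matrix.mulVec, dotProduct, Fintype.sum_sum_type, HLkp,
      Matrix.fromRows_apply_inl, Matrix.fromRows_apply_inr,
      Matrix.fromCols_apply_inl, Matrix.fromCols_apply_inr, Matrix.one_apply,
      Matrix.zero_apply, ite_mul, one_mul, zero_mul, Finset.sum_ite_eq,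
      Finset.mem_univ, if_true, Finset.sum_const_zero, zero_add, Pi.zero_apply] at this
    exact this
  have hb : ∀ i, b i = (∑ j, a j) + a i := by
    intro i
    have h := h1 i
    rw [gmat_mulvec] at h
    rw [eq_neg_of_add_eq_zero_right h, CharTwo.neg_eq]
  have ha : a = 0 := by
    by_contra ha
    have h4 : 4 ≤ wt a + wt b := pair_wt hk a b ha hb
    have : wt u = wt a + (wt b + wt c) := by
      rw [wt_sum]
      congr 1
      exact wt_sum _
    omega
  have hb0 : ∀ i, b i = 0 := by
    intro i
    rw [hb i, ha]
    simp
  funext x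
  cases x with
  | inl i => exact congrFun ha i
  | inr x =>
    cases x with
    | inl i => exact hb0 i
    | inr i =>
      have := h2 i
      rw [congrFun ha i] at this
      simpa using this

lemma dot_span {ι : Type*} [Fintype ι] (z : ι → ZMod 2) {v : ι → ZMod 2}
    {S : Set (ι → ZMod 2)} (hS : ∀ r ∈ S, ∑ j, z j * r j = 0)
    (hv : v ∈ Submodule.span (ZMod 2) S) : ∑ j, z j * v j = 0 := by
  let φ : (ι → ZMod 2) →ₗ[ZMod 2] ZMod 2 :=
    { toFun := fun x => ∑ j, z j * x j
      map_add' := by intro x y; simp [mul_add, Finset.sum_add_distrib]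
      map_smul' := by
        intro r x
        simp only [Pi.smul_apply, smul_eq_mul, RingHom.id_apply, Finset.mul_sum]
        exact Finset.sum_congr rfl fun j _ => by ring }
  have hle : Submodule.span (ZMod 2) S ≤ LinearMap.ker φ :=
    Submodule.span_le.mpr fun r hr => LinearMap.mem_ker.mpr (hS r hr)
  exact hle hv

lemma part2 {k : ℕ} (hk : 4 ≤ k) (w : (Fin k ⊕ Fin k) × (Fin k ⊕ Fin k ⊕ Fin k) → ZMod 2)
    (hw0 : HZq k *ᵥ w = 0) (hwt : wt w ≤ 3) :
    w ∈ Submodule.span (ZMod 2) (Set.range (HXq k)) := by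
  classical
  set U : Fin k → (Fin k ⊕ Fin k ⊕ Fin k) → ZMod 2 :=
    fun i q => ∑ j, GLk k i j * w (j, q) with hU_def
  have hU : ∀ i, HLkp k *ᵥ U i = 0 := by
    intro i; funext p
    have h := congrFun hw0 (i, p)
    simp only [Matrix.mulVec, dotProduct, HZq, Matrix.kroneckerMap_apply,
      Fintype.sum_prod_type, Pi.zero_apply] at h
    rw [Finset.sum_comm] at h
    simp only [Matrix.mulVec, dotProduct, Pi.zero_apply, hU_def]
    rw [← h]
    exact Finset.sum_congr rfl fun q _ => by
      rw [Finset.mul_sum]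
      exact Finset.sum_congr rfl fun j _ => by ring
  have hUf : ∀ i q, U i q = w (Sum.inl i, q) + ((∑ j, w (Sum.inr j, q)) + w (Sum.inr i, q)) := by
    intro i q
    show ∑ j, GLk k i j * w (j, q) = _
    rw [Fintype.sum_sum_type]
    congr 1
    · simp [GLk, Matrix.one_apply, ite_mul, Finset.sum_ite_eq]
    · rw [← gmat_mulvec (fun j => w (Sum.inr j, q)) i]
      exact Finset.sum_congr rfl fun j _ => by simp [GLk]
  -- the set of column indices where w is supported
  set Q : Finset (Fin k ⊕ Fin k ⊕ Fin k) :=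
    (Finset.univ.filter fun x : (Fin k ⊕ Fin k) × (Fin k ⊕ Fin k ⊕ Fin k) => w x ≠ 0).image
      Prod.snd with hQ_def
  have hQcard : Q.card ≤ 3 := le_trans Finset.card_image_le hwt
  -- find a row index i0 not used by w
  set bad : Finset (Fin k) :=
    (Finset.univ.filter fun x : (Fin k ⊕ Fin k) × (Fin k ⊕ Fin k ⊕ Fin k) => w x ≠ 0).image
      (fun x => Sum.elim id id x.1) with hbad_def
  have hbadcard : bad.card ≤ 3 := le_trans Finset.card_image_le hwt
  obtain ⟨i0, hi0⟩ : ∃ i0 : Fin k, i0 ∉ bad := by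
    by_contra h
    push_neg at h
    have heq : bad = Finset.univ := Finset.eq_univ_iff_forall.mpr h
    rw [heq, Finset.card_univ, Fintype.card_fin] at hbadcard
    omega
  have hzl : ∀ q, w (Sum.inl i0, q) = 0 := by
    intro q; by_contra h
    exact hi0 (Finset.mem_image.mpr ⟨(Sum.inl i0, q), by simp [h], rfl⟩)
  have hzr : ∀ q, w (Sum.inr i0, q) = 0 := by
    intro q; by_contra h
    exact hi0 (Finset.mem_image.mpr ⟨(Sum.inr i0, q), by simp [h], rfl⟩)
  -- the column sum vector s is a small kernel vector, hence zero
  have hs : (fun q => ∑ j, w (Sum.inr j, q)) = 0 := by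
    apply kerHLkp_small hk
    · have hUi0 : U i0 = fun q => ∑ j, w (Sum.inr j, q) := by
        funext q
        rw [hUf i0 q, hzl q, hzr q, zero_add, add_zero]
      rw [← hUi0]
      exact hU i0
    · refine le_trans (le_trans (Finset.card_le_card ?_) hQcard) le_rfl
      intro q hq
      simp only [Finset.mem_filter, Finset.mem_univ, true_and] at hq
      obtain ⟨j, hj⟩ : ∃ j, w (Sum.inr j, q) ≠ 0 := by
        by_contra hall
        push_neg at hall
        exact hq (Finset.sum_eq_zero fun j _ => hall j)
      exact Finset.mem_image.mpr ⟨(Sum.inr j, q), by simp [hj], rfl⟩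
  have hU0 : ∀ i, U i = 0 := by
    intro i
    apply kerHLkp_small hk _ (hU i)
    refine le_trans (le_trans (Finset.card_le_card ?_) hQcard) le_rfl
    intro q hq
    simp only [Finset.mem_filter, Finset.mem_univ, true_and] at hq
    rw [hUf i q, congrFun hs q] at hq
    simp only [Pi.zero_apply, zero_add] at hq
    rcases (by
      by_contra hboth
      push_neg at hboth
      rw [hboth.1, hboth.2] at hq
      exact hq (by simp) : w (Sum.inl i, q) ≠ 0 ∨ w (Sum.inr i, q) ≠ 0) with h | h
    · exact Finset.mem_image.mpr ⟨(Sum.inl i, q), by simp [h], rfl⟩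
    · exact Finset.mem_image.mpr ⟨(Sum.inr i, q), by simp [h], rfl⟩
  -- w is a combination of the rows of HXq
  have hrep : w = ∑ x : Fin k × (Fin k ⊕ Fin k ⊕ Fin k), w (Sum.inr x.1, x.2) • HXq k x := by
    funext y
    rw [Finset.sum_apply]
    have hterm : ∀ x : Fin k × (Fin k ⊕ Fin k ⊕ Fin k),
        (w (Sum.inr x.1, x.2) • HXq k x) y
          = w (Sum.inr x.1, x.2) * (HLk k x.1 y.1 * (if x.2 = y.2 then 1 else 0)) := by
      intro x
      simp [HXq, Matrix.kroneckerMap_apply, Matrix.one_apply]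
    rw [Finset.sum_congr rfl fun x _ => hterm x]
    rw [Fintype.sum_prod_type]
    have hinner : ∀ i : Fin k,
        (∑ p, w (Sum.inr i, p) * (HLk k i y.1 * (if p = y.2 then 1 else 0)))
          = w (Sum.inr i, y.2) * HLk k i y.1 := by
      intro i
      simp [mul_ite, mul_one, mul_zero, Finset.sum_ite_eq']
    rw [Finset.sum_congr rfl fun i _ => hinner i]
    have hsq : (∑ j, w (Sum.inr j, y.2)) = 0 := by
      have := congrFun hs y.2
      simpa using this
    rcases hy : y.1 with j' | j'
    · have hcg : ∀ i ∈ Finset.univ, w (Sum.inr i, y.2) * HLk k i (Sum.inl j')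
          = Gmat k j' i * w (Sum.inr i, y.2) := by
        intro i _
        have : HLk k i (Sum.inl j') = Gmat k j' i := by
          simp only [HLk, Matrix.fromCols_apply_inl, Gmat, eq_comm]
        rw [this, mul_comm]
      rw [Finset.sum_congr rfl hcg, gmat_mulvec, hsq, zero_add]
      have h0 := congrFun (hU0 j') y.2
      simp only [Pi.zero_apply] at h0
      have h1 := (hUf j' y.2).symm.trans h0
      rw [hsq, zero_add] at h1
      rw [show y = (Sum.inl j', y.2) from by rw [← hy]]
      exact ((eq_neg_of_add_eq_zero_right h1).trans (CharTwo.neg_eq _)).symm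
    · have : ∀ i ∈ Finset.univ, w (Sum.inr i, y.2) * HLk k i (Sum.inr j')
          = if j' = i then w (Sum.inr i, y.2) else 0 := by
        intro i _
        simp only [HLk, Matrix.fromCols_apply_inr, Matrix.one_apply]
        split <;> rename_i h
        · simp [h]
        · rw [if_neg (fun hh => h (hh.symm)), mul_zero]
      rw [Finset.sum_congr rfl this, Finset.sum_ite_eq, if_pos (Finset.mem_univ _),
        show y = (Sum.inr j', y.2) from by rw [← hy]]
  rw [hrep]
  exact Submodule.sum_mem _ fun x _ => Submodule.smul_mem _ _ (Submodule.subset_span ⟨x, rfl⟩)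

lemma part3 {k : ℕ} (hk : 4 ≤ k) :
    ∃ v : (Fin k ⊕ Fin k) × (Fin k ⊕ Fin k ⊕ Fin k) → ZMod 2,
      HXq k *ᵥ v = 0 ∧ v ∉ Submodule.span (ZMod 2) (Set.range (HZq k)) ∧ wt v = 4 := by
  classical
  set i0 : Fin k := ⟨0, by omega⟩ with hi0_def
  set i1 : Fin k := ⟨1, by omega⟩ with hi1_def
  have hne : i0 ≠ i1 := by simp [hi0_def, hi1_def, Fin.ext_iff]
  set avec : Fin k → ZMod 2 :=
    fun j => (if j = i0 then 1 else 0) + (if j = i1 then 1 else 0) with havec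
  set cvec : Fin k ⊕ Fin k → ZMod 2 := Sum.elim avec avec with hcvec
  set q0 : Fin k ⊕ Fin k ⊕ Fin k := Sum.inl i0 with hq0
  set v : (Fin k ⊕ Fin k) × (Fin k ⊕ Fin k ⊕ Fin k) → ZMod 2 :=
    fun x => (if x.2 = q0 then 1 else 0) * cvec x.1 with hv
  have hsa : ∑ j, avec j = 0 := by
    rw [havec, Finset.sum_add_distrib]
    rw [Finset.sum_ite_eq' Finset.univ i0 (fun _ => (1 : ZMod 2))]
    rw [Finset.sum_ite_eq' Finset.univ i1 (fun _ => (1 : ZMod 2))]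
    simp only [Finset.mem_univ, if_pos]
    decide
  have hHL : ∀ i, ∑ j, HLk k i j * cvec j = 0 := by
    intro i
    rw [Fintype.sum_sum_type]
    have h1 : ∑ j, HLk k i (Sum.inl j) * cvec (Sum.inl j) = avec i := by
      have : ∀ j, HLk k i (Sum.inl j) * cvec (Sum.inl j) = Gmat k i j * avec j := by
        intro j; simp [HLk, hcvec]
      rw [Finset.sum_congr rfl fun j _ => this j, gmat_mulvec, hsa, zero_add]
    have h2 : ∑ j, HLk k i (Sum.inr j) * cvec (Sum.inr j) = avec i := by
      have : ∀ j, HLk k i (Sum.inr j) * cvec (Sum.inr j)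
          = if i = j then avec j else 0 := by
        intro j
        simp only [HLk, Matrix.fromCols_apply_inr, Matrix.one_apply, hcvec, Sum.elim_inr,
          ite_mul, one_mul, zero_mul]
      rw [Finset.sum_congr rfl fun j _ => this j, Finset.sum_ite_eq, if_pos (Finset.mem_univ _)]
    rw [h1, h2, CharTwo.add_self_eq_zero]
  refine ⟨v, ?_, ?_, ?_⟩
  · -- in the kernel of HXq
    funext x
    obtain ⟨i, p⟩ := x
    simp only [Matrix.mulVec, dotProduct, HXq, Matrix.kroneckerMap_apply,
      Matrix.one_apply, Fintype.sum_prod_type, Pi.zero_apply, hv]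
    have hin : ∀ j, (∑ q, HLk k i j * (if p = q then (1:ZMod 2) else 0)
        * ((if q = q0 then 1 else 0) * cvec j))
        = (if p = q0 then 1 else 0) * (HLk k i j * cvec j) := by
      intro j
      have : ∀ q, HLk k i j * (if p = q then (1:ZMod 2) else 0)
          * ((if q = q0 then 1 else 0) * cvec j)
          = if p = q then (if q = q0 then 1 else 0) * (HLk k i j * cvec j) else 0 := by
        intro q
        split <;> ring
      rw [Finset.sum_congr rfl fun q _ => this q, Finset.sum_ite_eq, if_pos (Finset.mem_univ _)]
    rw [Finset.sum_congr rfl fun j _ => hin j, ← Finset.mul_sum, hHL i, mul_zero]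
  · -- not in the span of the rows of HZq
    intro hmem
    set uz : Fin k ⊕ Fin k → ZMod 2 :=
      Sum.elim (fun j => if j = i0 then 1 else 0) 0 with huz
    set lv : Fin k ⊕ Fin k ⊕ Fin k → ZMod 2 :=
      Sum.elim (fun j => if j = i0 then 1 else 0)
        (Sum.elim (fun j => if j = i0 then 0 else 1) (fun j => if j = i0 then 1 else 0)) with hlv_def
    set z : (Fin k ⊕ Fin k) × (Fin k ⊕ Fin k ⊕ Fin k) → ZMod 2 :=
      fun x => uz x.1 * lv x.2 with hz
    have hlv : ∀ p, ∑ q, HLkp k p q * lv q = 0 := by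
      intro p
      rw [Fintype.sum_sum_type, Fintype.sum_sum_type]
      cases p with
      | inl i =>
        have e1 : ∑ j, HLkp k (Sum.inl i) (Sum.inl j) * lv (Sum.inl j)
            = if i = i0 then 0 else 1 := by
          have : ∀ j, HLkp k (Sum.inl i) (Sum.inl j) * lv (Sum.inl j)
              = if j = i0 then Gmat k i j else 0 := by
            intro j
            simp only [HLkp, Matrix.fromRows_apply_inl, Matrix.fromCols_apply_inl,
              hlv_def, Sum.elim_inl, mul_ite, mul_one, mul_zero]
          rw [Finset.sum_congr rfl fun j _ => this j, Finset.sum_ite_eq', if_pos (Finset.mem_univ _)]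
          simp [Gmat]
        have e2 : ∑ j, HLkp k (Sum.inl i) (Sum.inr (Sum.inl j)) * lv (Sum.inr (Sum.inl j))
            = if i = i0 then 0 else 1 := by
          have : ∀ j, HLkp k (Sum.inl i) (Sum.inr (Sum.inl j)) * lv (Sum.inr (Sum.inl j))
              = if i = j then (if j = i0 then 0 else 1) else 0 := by
            intro j
            simp only [HLkp, Matrix.fromRows_apply_inl, Matrix.fromCols_apply_inr,
              Matrix.fromCols_apply_inl, Matrix.one_apply, hlv_def, Sum.elim_inr,
              Sum.elim_inl, ite_mul, one_mul, zero_mul]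
          rw [Finset.sum_congr rfl fun j _ => this j, Finset.sum_ite_eq, if_pos (Finset.mem_univ _)]
        have e3 : ∑ j, HLkp k (Sum.inl i) (Sum.inr (Sum.inr j)) * lv (Sum.inr (Sum.inr j)) = 0 := by
          apply Finset.sum_eq_zero
          intro j _
          simp [HLkp]
        rw [e1, e2, e3, add_zero, CharTwo.add_self_eq_zero]
      | inr i =>
        have e1 : ∑ j, HLkp k (Sum.inr i) (Sum.inl j) * lv (Sum.inl j)
            = if i = i0 then 1 else 0 := by
          have : ∀ j, HLkp k (Sum.inr i) (Sum.inl j) * lv (Sum.inl j)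
              = if i = j then (if j = i0 then 1 else 0) else 0 := by
            intro j
            simp only [HLkp, Matrix.fromRows_apply_inr, Matrix.fromCols_apply_inl,
              Matrix.one_apply, hlv_def, Sum.elim_inl, ite_mul, one_mul, zero_mul]
          rw [Finset.sum_congr rfl fun j _ => this j, Finset.sum_ite_eq, if_pos (Finset.mem_univ _)]
        have e2 : ∑ j, HLkp k (Sum.inr i) (Sum.inr (Sum.inl j)) * lv (Sum.inr (Sum.inl j)) = 0 := by
          apply Finset.sum_eq_zero
          intro j _
          simp [HLkp]
        have e3 : ∑ j, HLkp k (Sum.inr i) (Sum.inr (Sum.inr j)) * lv (Sum.inr (Sum.inr j))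
            = if i = i0 then 1 else 0 := by
          have : ∀ j, HLkp k (Sum.inr i) (Sum.inr (Sum.inr j)) * lv (Sum.inr (Sum.inr j))
              = if i = j then (if j = i0 then 1 else 0) else 0 := by
            intro j
            simp only [HLkp, Matrix.fromRows_apply_inr, Matrix.fromCols_apply_inr,
              Matrix.fromCols_apply_inl, Matrix.one_apply, hlv_def, Sum.elim_inr,
              ite_mul, one_mul, zero_mul]
          rw [Finset.sum_congr rfl fun j _ => this j, Finset.sum_ite_eq, if_pos (Finset.mem_univ _)]
        rw [e1, e2, e3, zero_add, CharTwo.add_self_eq_zero]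
    have hrows : ∀ r ∈ Set.range (HZq k), ∑ x, z x * r x = 0 := by
      rintro r ⟨⟨i, p⟩, rfl⟩
      rw [Fintype.sum_prod_type]
      apply Finset.sum_eq_zero
      intro j _
      have : ∀ q, z (j, q) * HZq k (i, p) (j, q)
          = (uz j * GLk k i j) * (HLkp k p q * lv q) := by
        intro q
        simp only [hz, HZq, Matrix.kroneckerMap_apply]
        ring
      rw [Finset.sum_congr rfl fun q _ => this q, ← Finset.mul_sum, hlv p, mul_zero]
    have hdot : ∑ x, z x * v x = 1 := by
      rw [Fintype.sum_prod_type]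
      have hin : ∀ j, (∑ q, z (j, q) * v (j, q)) = uz j * cvec j := by
        intro j
        have : ∀ q, z (j, q) * v (j, q)
            = if q = q0 then uz j * (lv q0 * cvec j) else 0 := by
          intro q
          simp only [hz, hv]
          split
          · rename_i h; subst h; ring
          · ring
        rw [Finset.sum_congr rfl fun q _ => this q, Finset.sum_ite_eq', if_pos (Finset.mem_univ _)]
        have : lv q0 = 1 := by simp [hlv_def, hq0]
        rw [this, one_mul]
      rw [Finset.sum_congr rfl fun j _ => hin j, Fintype.sum_sum_type]
      have e1 : ∑ j, uz (Sum.inl j) * cvec (Sum.inl j) = 1 := by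
        have : ∀ j, uz (Sum.inl j) * cvec (Sum.inl j)
            = if j = i0 then avec j else 0 := by
          intro j
          simp only [huz, hcvec, Sum.elim_inl, ite_mul, one_mul, zero_mul]
        rw [Finset.sum_congr rfl fun j _ => this j, Finset.sum_ite_eq', if_pos (Finset.mem_univ _)]
        simp [havec, hne, if_neg hne]
      have e2 : ∑ j, uz (Sum.inr j) * cvec (Sum.inr j) = 0 := by
        apply Finset.sum_eq_zero
        intro j _
        simp [huz]
      rw [e1, e2, add_zero]
    have := dot_span z hrows hmem
    rw [hdot] at this
    exact one_ne_zero this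
  · -- weight four
    have hwc : wt v = wt cvec := by
      simp only [wt, Finset.card_filter]
      rw [Fintype.sum_prod_type]
      have hin : ∀ j : Fin k ⊕ Fin k,
          (∑ q, if v (j, q) ≠ 0 then 1 else 0) = if cvec j ≠ 0 then 1 else 0 := by
        intro j
        have : ∀ q, (if v (j, q) ≠ 0 then (1:ℕ) else 0)
            = if q = q0 then (if cvec j ≠ 0 then 1 else 0) else 0 := by
          intro q
          simp only [hv]
          by_cases h : q = q0 <;> simp [h]
        rw [Finset.sum_congr rfl fun q _ => this q, Finset.sum_ite_eq', if_pos (Finset.mem_univ _)]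
      exact Finset.sum_congr rfl fun j _ => hin j
    have hwa : wt avec = 2 := by
      have hfa : (Finset.univ.filter fun j => avec j ≠ 0) = {i0, i1} := by
        ext j
        simp only [Finset.mem_filter, Finset.mem_univ, true_and, Finset.mem_insert,
          Finset.mem_singleton, havec]
        by_cases h0 : j = i0
        · subst h0; simp [if_neg hne]
        · by_cases h1 : j = i1
          · subst h1; simp [h0]
          · simp [h0, h1]
      rw [wt, hfa, Finset.card_pair hne]
    rw [hwc, hcvec]
    have := wt_sum (Sum.elim avec avec)
    simp only [Sum.elim_inl, Sum.elim_inr] at this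
    rw [this]
    · rw [show (fun i => avec i) = avec from rfl] at *
      omega

/-- Minimum distance of the quantum code `QL_k` for `k ≥ 4`: every `Z`-logical
representative (in `ker H_X` but not in the row space of `H_Z`) has weight at least 4,
every `X`-logical representative (in `ker H_Z` but not in the row space of `H_X`) has
weight at least 4, and one such vector of weight exactly 4 exists. -/
theorem minDistance_QLk_eq_four (k : ℕ) (hk : 4 ≤ k) :
    (∀ v : (Fin k ⊕ Fin k) × (Fin k ⊕ Fin k ⊕ Fin k) → ZMod 2,
      Matrix.mulVec (HXq k) v = 0 →
      v ∉ Submodule.span (ZMod 2) (Set.range (HZq k)) → 4 ≤ wt v) ∧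
    (∀ w : (Fin k ⊕ Fin k) × (Fin k ⊕ Fin k ⊕ Fin k) → ZMod 2,
      Matrix.mulVec (HZq k) w = 0 →
      w ∉ Submodule.span (ZMod 2) (Set.range (HXq k)) → 4 ≤ wt w) ∧
    ((∃ v : (Fin k ⊕ Fin k) × (Fin k ⊕ Fin k ⊕ Fin k) → ZMod 2,
        Matrix.mulVec (HXq k) v = 0 ∧
        v ∉ Submodule.span (ZMod 2) (Set.range (HZq k)) ∧ wt v = 4) ∨
      (∃ w : (Fin k ⊕ Fin k) × (Fin k ⊕ Fin k ⊕ Fin k) → ZMod 2,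
        Matrix.mulVec (HZq k) w = 0 ∧
        w ∉ Submodule.span (ZMod 2) (Set.range (HXq k)) ∧ wt w = 4)) := by
  refine ⟨?_, ?_, Or.inl (part3 hk)⟩
  · intro v hv hvs
    have hvne : v ≠ 0 := by rintro rfl; exact hvs (Submodule.zero_mem _)
    obtain ⟨⟨j0, q0⟩, hx⟩ := Function.ne_iff.mp hvne
    simp only [Pi.zero_apply] at hx
    set c : Fin k ⊕ Fin k → ZMod 2 := fun j => v (j, q0) with hc_def
    have hck : HLk k *ᵥ c = 0 := by
      funext i
      have h := congrFun hv (i, q0)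
      simp only [Matrix.mulVec, dotProduct, HXq, Matrix.kroneckerMap_apply,
        Matrix.one_apply, Fintype.sum_prod_type, Pi.zero_apply] at h ⊢
      rw [← h]
      refine Finset.sum_congr rfl fun j _ => ?_
      have : ∀ q, HLk k i j * (if q0 = q then (1:ZMod 2) else 0) * v (j, q)
          = if q0 = q then HLk k i j * v (j, q) else 0 := by
        intro q; split <;> ring
      rw [Finset.sum_congr rfl fun q _ => this q, Finset.sum_ite_eq, if_pos (Finset.mem_univ _)]
    have hcne : c ≠ 0 := by
      intro h0
      exact hx (congrFun h0 j0)
    have h4 : 4 ≤ wt c := kerHLk_wt hk c hck hcne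
    have hle : wt c ≤ wt v := by
      apply Finset.card_le_card_of_injOn (fun j => (j, q0))
      · intro j hj
        simp only [Finset.coe_filter, Set.mem_setOf_eq, Finset.mem_filter, Finset.mem_univ, true_and] at hj ⊢
        exact hj
      · intro a _ b _ h
        exact (Prod.mk.injEq _ _ _ _ ▸ h : _ ∧ _).1
    omega
  · intro w hw hws
    by_contra hlt
    push_neg at hlt
    exact hws (part2 hk w hw (by omega))
end
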